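/- Let u : ℝ² → ℝ be a C² function satisfying c¹ u_{y¹} + c² u_{y²} = 2A₁y¹ + 2A₂y² with c¹, c² ≠ 0, and suppose u is positively homogeneous of degree 2 on ℝ² \ {0}. Then u is a polynomial of degree at most 2 in (y¹, y²) with no constant or linear terms; explicitly u(y) = (A₁/c¹)(y¹)² + (A₂/c²)(y²)² + a(c²y¹ − c¹y²)² for some a ∈ ℝ. -/

import Mathlib

/-- Directional (partial) derivative of a function on ℝ². -/
noncomputable def pd (v : ℝ × ℝ) (u : ℝ × ℝ → ℝ) (y : ℝ × ℝ) : ℝ := fderiv ℝ u y v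

/-- A C² positively 2-homogeneous solution of the transport PDE is an explicit
quadratic polynomial. -/
theorem stmt10 (c1 c2 A1 A2 : ℝ) (hc1 : c1 ≠ 0) (hc2 : c2 ≠ 0)
    (u : ℝ × ℝ → ℝ) (hu : ContDiff ℝ 2 u)
    (hpde : ∀ y : ℝ × ℝ,
      c1 * pd (1, 0) u y + c2 * pd (0, 1) u y = 2 * A1 * y.1 + 2 * A2 * y.2)
    (hhom : ∀ t : ℝ, 0 < t → ∀ y : ℝ × ℝ, y ≠ 0 → u (t • y) = t ^ 2 * u y) :
    ∃ a : ℝ, ∀ y : ℝ × ℝ,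
      u y = (A1 / c1) * y.1 ^ 2 + (A2 / c2) * y.2 ^ 2
        + a * (c2 * y.1 - c1 * y.2) ^ 2 := by
  have hu1 : Differentiable ℝ u := hu.differentiable (by norm_num)
  set d : ℝ × ℝ := (c1, c2) with hd
  set v : ℝ × ℝ := (c2, -c1) with hv
  set n : ℝ := c1 ^ 2 + c2 ^ 2 with hn
  have hnpos : 0 < n := by positivity
  -- directional derivative along d
  have hdir : ∀ z : ℝ × ℝ, fderiv ℝ u z d = 2 * A1 * z.1 + 2 * A2 * z.2 := by
    intro z
    have h1 : d = c1 • ((1:ℝ), (0:ℝ)) + c2 • ((0:ℝ), (1:ℝ)) := by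
      simp [hd, Prod.ext_iff]
    rw [h1, map_add, map_smul, map_smul]
    simpa [pd, smul_eq_mul] using hpde z
  set Q : ℝ × ℝ → ℝ := fun y => (A1/c1) * y.1 ^ 2 + (A2/c2) * y.2 ^ 2 with hQ
  set w : ℝ × ℝ → ℝ := fun y => u y - Q y with hw
  have hQc : ContDiff ℝ 2 Q :=
    (contDiff_const.mul (contDiff_fst.pow 2)).add (contDiff_const.mul (contDiff_snd.pow 2))
  have hwc : ContDiff ℝ 2 w := hu.sub hQc
  -- u 0 = 0
  have hu0 : u 0 = 0 := by
    have hcontu : Continuous u := hu.continuous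
    have h1 : Filter.Tendsto (fun t : ℝ => u (t • ((1:ℝ),(0:ℝ)))) (nhdsWithin 0 (Set.Ioi 0)) (nhds (u 0)) := by
      have hsm : Filter.Tendsto (fun t : ℝ => t • ((1:ℝ),(0:ℝ))) (nhds 0) (nhds 0) := by
        have := (continuous_id.smul (continuous_const : Continuous fun _ : ℝ => ((1:ℝ),(0:ℝ)))).tendsto 0
        convert this using 2
        · rfl
        · show (0:ℝ×ℝ) = (0:ℝ) • ((1:ℝ),(0:ℝ))
          simp
      exact (hcontu.tendsto 0).comp (hsm.mono_left nhdsWithin_le_nhds)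
    have h2 : Filter.Tendsto (fun t : ℝ => u (t • ((1:ℝ),(0:ℝ)))) (nhdsWithin 0 (Set.Ioi 0)) (nhds 0) := by
      have h3 : Filter.Tendsto (fun t : ℝ => t ^ 2 * u (1,0)) (nhdsWithin 0 (Set.Ioi 0)) (nhds 0) := by
        have h4 : Filter.Tendsto (fun t : ℝ => t ^ 2 * u (1,0)) (nhds 0) (nhds ((0:ℝ) ^ 2 * u (1,0))) :=
          ((continuous_pow 2).mul continuous_const).tendsto 0
        simpa using h4.mono_left nhdsWithin_le_nhds
      apply h3.congr'
      filter_upwards [self_mem_nhdsWithin] with t ht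
      exact (hhom t ht (1,0) (by norm_num [Prod.ext_iff])).symm
    exact tendsto_nhds_unique h1 h2
  have hw0 : w 0 = 0 := by simp [hw, hQ, hu0]
  -- w is constant along direction d
  have hconst : ∀ (y : ℝ × ℝ) (s : ℝ), w (y + s • d) = w y := by
    intro y s
    have hder : ∀ s : ℝ, HasDerivAt (fun s : ℝ => w (y + s • d)) 0 s := by
      intro s
      have hline : HasDerivAt (fun s : ℝ => y + s • d) d s := by
        simpa using ((hasDerivAt_id s).smul_const d).const_add y
      have hu' : HasDerivAt (fun s : ℝ => u (y + s • d)) (fderiv ℝ u (y + s • d) d) s :=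
        (hu1 (y + s • d)).hasFDerivAt.comp_hasDerivAt s hline
      have h11 : HasDerivAt (fun s : ℝ => y.1 + s * c1) c1 s := by
        simpa using ((hasDerivAt_id s).mul_const c1).const_add y.1
      have h21 : HasDerivAt (fun s : ℝ => y.2 + s * c2) c2 s := by
        simpa using ((hasDerivAt_id s).mul_const c2).const_add y.2
      have hq : HasDerivAt (fun s : ℝ => Q (y + s • d))
          ((A1/c1) * (2 * (y.1 + s*c1) ^ 1 * c1) + (A2/c2) * (2 * (y.2 + s*c2) ^ 1 * c2)) s := by
        have := ((h11.pow 2).const_mul (A1/c1)).add ((h21.pow 2).const_mul (A2/c2))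
        convert this using 1
        · rfl
        · rfl
        · ext x
          simp [hQ, hd]
        · simp
      have hcomb := hu'.sub hq
      have heq : fderiv ℝ u (y + s • d) d -
          ((A1/c1) * (2 * (y.1 + s*c1) ^ 1 * c1) + (A2/c2) * (2 * (y.2 + s*c2) ^ 1 * c2)) = 0 := by
        rw [hdir]
        have e1 : (y + s • d).1 = y.1 + s * c1 := by simp [hd]
        have e2 : (y + s • d).2 = y.2 + s * c2 := by simp [hd]
        rw [e1, e2]
        field_simp
        ring
      rw [heq] at hcomb
      exact hcomb
    have := is_const_of_deriv_eq_zero (fun s => (hder s).differentiableAt)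
      (fun s => (hder s).deriv) s 0
    simpa using this
  -- 2-homogeneity of w
  have hwh : ∀ t : ℝ, 0 < t → ∀ y : ℝ × ℝ, w (t • y) = t ^ 2 * w y := by
    intro t ht y
    by_cases hy : y = 0
    · simp [hy, hw0]
    · have hQh : Q (t • y) = t ^ 2 * Q y := by
        simp only [hQ, Prod.smul_fst, Prod.smul_snd, smul_eq_mul]
        ring
      simp only [hw, hQh, hhom t ht y hy]
      ring
  -- reduction to one variable
  have hdec : ∀ y : ℝ × ℝ, w y = w (((c2 * y.1 - c1 * y.2)/n) • v) := by
    intro y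
    set r := (c2 * y.1 - c1 * y.2)/n with hr
    set s := (c1 * y.1 + c2 * y.2)/n with hs
    have hy : y = r • v + s • d := by
      apply Prod.ext
      · simp [hv, hd, hr, hs, smul_eq_mul]
        field_simp
        ring
      · simp [hv, hd, hr, hs, smul_eq_mul]
        field_simp
        ring
    calc w y = w (r • v + s • d) := by rw [← hy]
      _ = w (r • v) := hconst _ s
  set ψ : ℝ → ℝ := fun r => w (r • v) with hψ
  have hψc : ContDiff ℝ 2 ψ := hwc.comp (contDiff_id.smul contDiff_const)
  have hψ0 : ψ 0 = 0 := by simp [hψ, hw0]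
  have hpos : ∀ r : ℝ, 0 < r → ψ r = ψ 1 * r ^ 2 := by
    intro r hr
    have := hwh r hr v
    simp only [hψ, one_smul]
    rw [this]; ring
  have hneg : ∀ r : ℝ, r < 0 → ψ r = ψ (-1) * r ^ 2 := by
    intro r hr
    have h1 := hwh (-r) (by linarith) (-v)
    have h2 : (-r) • (-v) = r • v := by simp
    rw [h2] at h1
    simp only [hψ, neg_one_smul]
    rw [h1]; ring
  -- second derivative of ψ
  have hcont2 : Continuous (deriv (deriv ψ)) := by
    have h1 : ContDiff ℝ 1 (deriv ψ) := by
      have := (contDiff_succ_iff_deriv (n := 1)).mp (by exact_mod_cast hψc)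
      exact this.2.2
    exact h1.continuous_deriv le_rfl
  have hF : ∀ r : ℝ, 0 < r → deriv ψ r = 2 * ψ 1 * r := by
    intro r hr
    have he : ψ =ᶠ[nhds r] fun x => ψ 1 * x ^ 2 := by
      filter_upwards [isOpen_Ioi.mem_nhds hr] with x hx using hpos x hx
    rw [he.deriv_eq, ((hasDerivAt_pow 2 r).const_mul (ψ 1)).deriv]
    ring
  have hF2 : ∀ r : ℝ, 0 < r → deriv (deriv ψ) r = 2 * ψ 1 := by
    intro r hr
    have he : deriv ψ =ᶠ[nhds r] fun x => 2 * ψ 1 * x := by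
      filter_upwards [isOpen_Ioi.mem_nhds hr] with x hx using hF x hx
    rw [he.deriv_eq]
    simpa using ((hasDerivAt_id r).const_mul (2 * ψ 1)).deriv
  have hG : ∀ r : ℝ, r < 0 → deriv ψ r = 2 * ψ (-1) * r := by
    intro r hr
    have he : ψ =ᶠ[nhds r] fun x => ψ (-1) * x ^ 2 := by
      filter_upwards [isOpen_Iio.mem_nhds hr] with x hx using hneg x hx
    rw [he.deriv_eq, ((hasDerivAt_pow 2 r).const_mul (ψ (-1))).deriv]
    ring
  have hG2 : ∀ r : ℝ, r < 0 → deriv (deriv ψ) r = 2 * ψ (-1) := by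
    intro r hr
    have he : deriv ψ =ᶠ[nhds r] fun x => 2 * ψ (-1) * x := by
      filter_upwards [isOpen_Iio.mem_nhds hr] with x hx using hG x hx
    rw [he.deriv_eq]
    simpa using ((hasDerivAt_id r).const_mul (2 * ψ (-1))).deriv
  have hlimR : deriv (deriv ψ) 0 = 2 * ψ 1 := by
    have h1 : Filter.Tendsto (deriv (deriv ψ)) (nhdsWithin 0 (Set.Ioi 0)) (nhds (deriv (deriv ψ) 0)) :=
      (hcont2.tendsto 0).mono_left nhdsWithin_le_nhds
    have h2 : Filter.Tendsto (deriv (deriv ψ)) (nhdsWithin 0 (Set.Ioi 0)) (nhds (2 * ψ 1)) := by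
      apply Filter.Tendsto.congr' _ tendsto_const_nhds
      filter_upwards [self_mem_nhdsWithin] with x hx using (hF2 x hx).symm
    exact tendsto_nhds_unique h1 h2
  have hlimL : deriv (deriv ψ) 0 = 2 * ψ (-1) := by
    have h1 : Filter.Tendsto (deriv (deriv ψ)) (nhdsWithin 0 (Set.Iio 0)) (nhds (deriv (deriv ψ) 0)) :=
      (hcont2.tendsto 0).mono_left nhdsWithin_le_nhds
    have h2 : Filter.Tendsto (deriv (deriv ψ)) (nhdsWithin 0 (Set.Iio 0)) (nhds (2 * ψ (-1))) := by
      apply Filter.Tendsto.congr' _ tendsto_const_nhds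
      filter_upwards [self_mem_nhdsWithin] with x hx using (hG2 x hx).symm
    exact tendsto_nhds_unique h1 h2
  have hkey : ψ (-1) = ψ 1 := by
    have := hlimR.symm.trans hlimL
    linarith
  -- conclude
  refine ⟨ψ 1 / n ^ 2, fun y => ?_⟩
  have hdy := hdec y
  set r := (c2 * y.1 - c1 * y.2)/n with hrdef
  have hψr : ψ r = ψ 1 * r ^ 2 := by
    rcases lt_trichotomy r 0 with h | h | h
    · rw [hneg r h, hkey]
    · rw [h, hψ0]; ring
    · exact hpos r h
  have hwy : w y = ψ 1 * r ^ 2 := by rw [hdy]; exact hψr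
  have hr2 : r ^ 2 = (c2 * y.1 - c1 * y.2) ^ 2 / n ^ 2 := by
    rw [hrdef]; field_simp
  have : u y = Q y + w y := by simp [hw]
  rw [this, hwy, hr2, hQ]
  field_simp
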